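/- In the Gaussian process regression model with kernel k and noise variance σ², choosing the auxiliary input Z = x* gives variational aleatoric entropy V_a(y*|x*, x*, D) = U_a + (1/2) log(2 − σ²/(v(x*) + σ²)), where U_a = (1/2)(1 + log 2πσ²) and v(x*) = k(x*, x*) − K_{*X}(K_{XX} + σ² I)^{-1} K_{X*} is the noiseless posterior variance at x*; in particular the excess over U_a tends to 0 as v(x*) → 0. -/
import Mathlib


open Matrix Filter Real

/-- GP regression with auxiliary input `Z = x*`: with noise variance `σ²` and noiseless
posterior variance `v(x*) = k(x*,x*) − K_{*X}(K_{XX} + σ²I)⁻¹K_{X*} ≥ 0`, conditioning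
on one fantasised observation at `x*` reduces the predictive variance by
`Δ = v(x*)²/(v(x*) + σ²)`, and the variational aleatoric entropy satisfies
`V_a = U_a + (1/2) log(2 − σ²/(v(x*) + σ²))` where `U_a = (1/2)(1 + log 2πσ²)`;
the excess over `U_a` tends to `0` as `v(x*) → 0⁺`. -/
theorem gp_repeated_aux_variational_entropy
    {n : ℕ} (σ : ℝ) (hσ : 0 < σ)
    (KXX : Matrix (Fin n) (Fin n) ℝ) (kstar : ℝ) (kvec : Fin n → ℝ)
    (v : ℝ)
    (hv : v = kstar - kvec ⬝ᵥ (KXX + σ ^ 2 • (1 : Matrix (Fin n) (Fin n) ℝ))⁻¹.mulVec kvec)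
    (hv0 : 0 ≤ v)
    (Δ : ℝ) (hΔ : Δ = v ^ 2 / (v + σ ^ 2))
    (Ua : ℝ) (hUa : Ua = (1 / 2) * (1 + Real.log (2 * Real.pi * σ ^ 2)))
    (Va : ℝ) (hVa : Va = (1 / 2) * (1 + Real.log (2 * Real.pi)) +
      (1 / 2) * Real.log (v + σ ^ 2 - Δ)) :
    Va = Ua + (1 / 2) * Real.log (2 - σ ^ 2 / (v + σ ^ 2))
    ∧ Tendsto (fun w : ℝ => (1 / 2) * Real.log (2 - σ ^ 2 / (w + σ ^ 2)))
        (nhdsWithin 0 (Set.Ici 0)) (nhds 0) := by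
  have hσ2 : (0:ℝ) < σ ^ 2 := by positivity
  have hvs : (0:ℝ) < v + σ ^ 2 := by linarith
  constructor
  · have hfac : v + σ ^ 2 - Δ = σ ^ 2 * (2 - σ ^ 2 / (v + σ ^ 2)) := by
      rw [hΔ]
      field_simp
      ring
    have hg : (1:ℝ) ≤ 2 - σ ^ 2 / (v + σ ^ 2) := by
      have : σ ^ 2 / (v + σ ^ 2) ≤ 1 := by
        rw [div_le_one hvs]; linarith
      linarith
    rw [hVa, hUa, hfac, Real.log_mul (ne_of_gt hσ2) (by linarith),
      Real.log_mul (by positivity) (ne_of_gt hσ2)]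
    ring
  · have hcont : ContinuousAt (fun w : ℝ => (1 / 2) * Real.log (2 - σ ^ 2 / (w + σ ^ 2))) 0 := by
      apply ContinuousAt.mul continuousAt_const
      apply ContinuousAt.comp (Real.continuousAt_log ?_)
      · exact (continuousAt_const.sub (continuousAt_const.div
          ((continuous_id.add continuous_const).continuousAt) (by simpa using hσ2.ne')))
      · simp [div_self hσ2.ne']; norm_num
    have := hcont.tendsto
    simp only [zero_add, div_self hσ2.ne', Real.log_one, mul_zero] at this
    have h1 : (2 : ℝ) - 1 = 1 := by norm_num
    rw [h1] at this
    simpa using this.mono_left nhdsWithin_le_nhds
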